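/- Let X, X̂ ∈ ℝ^{I₁×⋯×I_d} be two d-mode tensors and for each k = 1,…,d let A^{(k)} be a real I_k × r_k matrix with orthonormal columns, so that P_k = A^{(k)}A^{(k)ᵀ} is an orthogonal projection on ℝ^{I_k}. Then ‖X − X̂ ×₁ P₁ ×₂ P₂ ⋯ ×_d P_d‖ ≤ ‖X − X̂ ×_d P_d‖ + ‖X̂ − X̂ ×₁ P₁ ×₂ ⋯ ×_{d−1} P_{d−1}‖. -/

import Mathlib

open Matrix MeasureTheory ProbabilityTheory
open scoped BigOperators ENNReal

noncomputable section

/-- The Frobenius norm of a real matrix. -/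
def frobNorm {m n : Type*} [Fintype m] [Fintype n] (A : Matrix m n ℝ) : ℝ :=
  Real.sqrt (∑ i, ∑ j, (A i j) ^ 2)

/-- `B` is a best rank-`k` approximation of `A` in Frobenius norm. -/
def IsBestRankApprox {m n : Type*} [Fintype m] [Fintype n]
    (A B : Matrix m n ℝ) (k : ℕ) : Prop :=
  B.rank ≤ k ∧ ∀ C : Matrix m n ℝ, C.rank ≤ k → frobNorm (A - B) ≤ frobNorm (A - C)

/-- A `d`-mode real tensor of size `I 0 × ⋯ × I (d-1)`. -/
abbrev Tensor (d : ℕ) (I : Fin d → ℕ) : Type := (∀ i : Fin d, Fin (I i)) → ℝ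

/-- The Frobenius-type norm of a tensor. -/
def tnorm {d : ℕ} {I : Fin d → ℕ} (X : Tensor d I) : ℝ :=
  Real.sqrt (∑ idx, (X idx) ^ 2)

/-- The mode-`n` product of a tensor with a square `I n × I n` matrix. -/
def modeProd {d : ℕ} {I : Fin d → ℕ} (X : Tensor d I) (n : Fin d)
    (M : Matrix (Fin (I n)) (Fin (I n)) ℝ) : Tensor d I :=
  fun idx => ∑ t : Fin (I n), M (idx n) t * X (Function.update idx n t)

/-- Iterated mode products `X ×_{l₁} M l₁ ×_{l₂} ⋯` along a list of modes. -/
def multiProd {d : ℕ} {I : Fin d → ℕ} (X : Tensor d I)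
    (M : ∀ k : Fin d, Matrix (Fin (I k)) (Fin (I k)) ℝ) (l : List (Fin d)) : Tensor d I :=
  l.foldl (fun Y k => modeProd Y k (M k)) X

/-- The matricization of a tensor along mode `k` : an `I k × ∏_{j ≠ k} I j` matrix. -/
def matricize {d : ℕ} {I : Fin d → ℕ} (X : Tensor d I) (k : Fin d) :
    Matrix (Fin (I k)) (∀ j : {j : Fin d // j ≠ k}, Fin (I j.1)) ℝ :=
  fun a c => X (fun j => if h : j = k then Fin.cast (congrArg I h).symm a else c ⟨j, h⟩)

/-- If `AᵀA = 1`, then `P = AAᵀ` is an orthogonal projection, hence a contraction. -/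
lemma vec_proj_sq_le {N R : ℕ} (A : Matrix (Fin N) (Fin R) ℝ) (hA : Aᵀ * A = 1)
    (v : Fin N → ℝ) :
    ∑ i, (((A * Aᵀ) *ᵥ v) i) ^ 2 ≤ ∑ i, (v i) ^ 2 := by
  set P := A * Aᵀ with hP
  have hPT : Pᵀ = P := by simp [hP, Matrix.transpose_mul]
  have hPP : P * P = P := by
    rw [hP, Matrix.mul_assoc, ← Matrix.mul_assoc Aᵀ, hA, Matrix.one_mul]
  have key : ∑ i, ((P *ᵥ v) i) ^ 2 = ∑ i, v i * (P *ᵥ v) i := by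
    have h1 : (P *ᵥ v) ⬝ᵥ (P *ᵥ v) = v ⬝ᵥ (P *ᵥ v) := by
      have h2 : (P *ᵥ v) ᵥ* P = P *ᵥ v := by
        rw [← hPT, Matrix.vecMul_transpose, Matrix.mulVec_mulVec, hPT, hPP]
      rw [Matrix.dotProduct_mulVec, h2, dotProduct_comm]
    simpa [dotProduct, sq] using h1
  have h0 : (0:ℝ) ≤ ∑ i, (v i - (P *ᵥ v) i) ^ 2 :=
    Finset.sum_nonneg fun i _ => sq_nonneg _
  have expand : ∑ i, (v i - (P *ᵥ v) i) ^ 2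
      = ∑ i, (v i)^2 - 2 * ∑ i, v i * (P *ᵥ v) i + ∑ i, ((P *ᵥ v) i)^2 := by
    have e1 : ∀ i ∈ Finset.univ, (v i - (P *ᵥ v) i) ^ 2
        = (v i)^2 - 2 * (v i * (P *ᵥ v) i) + ((P *ᵥ v) i)^2 := fun i _ => by ring
    rw [Finset.sum_congr rfl e1, Finset.sum_add_distrib, Finset.sum_sub_distrib,
      ← Finset.mul_sum]
  linarith [key, h0, expand]

lemma tnorm_eq_norm {d : ℕ} {I : Fin d → ℕ} (X : Tensor d I) :
    tnorm X = ‖(WithLp.equiv 2 (((i : Fin d) → Fin (I i)) → ℝ)).symm X‖ := by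
  rw [EuclideanSpace.norm_eq]
  simp [tnorm, Real.norm_eq_abs, sq_abs]

lemma tnorm_add_le {d : ℕ} {I : Fin d → ℕ} (X Y : Tensor d I) :
    tnorm (X + Y) ≤ tnorm X + tnorm Y := by
  rw [tnorm_eq_norm, tnorm_eq_norm, tnorm_eq_norm]
  exact norm_add_le _ _

lemma modeProd_contract {d : ℕ} {I : Fin d → ℕ} (Z : Tensor d I) (n : Fin d) {R : ℕ}
    (A : Matrix (Fin (I n)) (Fin R) ℝ) (hA : Aᵀ * A = 1) :
    tnorm (modeProd Z n (A * Aᵀ)) ≤ tnorm Z := by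
  unfold tnorm
  apply Real.sqrt_le_sqrt
  classical
  set e := Equiv.piSplitAt n (fun i => Fin (I i)) with he
  have hupd : ∀ (a t : Fin (I n)) (c : ∀ j : {j : Fin d // j ≠ n}, Fin (I j.1)),
      Function.update (e.symm (a, c)) n t = e.symm (t, c) := by
    intro a t c
    funext j
    rcases eq_or_ne j n with h | h
    · subst h; simp [he, Equiv.piSplitAt]
    · simp [he, Equiv.piSplitAt, h, Function.update_of_ne h]
  have happ : ∀ (a : Fin (I n)) c, (e.symm (a, c)) n = a := by
    intro a c; simp [he, Equiv.piSplitAt]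
  calc ∑ idx, (modeProd Z n (A*Aᵀ) idx)^2
      = ∑ p : Fin (I n) × (∀ j : {j : Fin d // j ≠ n}, Fin (I j.1)),
          (modeProd Z n (A*Aᵀ) (e.symm p))^2 := (Equiv.sum_comp e.symm _).symm
    _ = ∑ c, ∑ a, (((A*Aᵀ) *ᵥ fun t => Z (e.symm (t, c))) a)^2 := by
        rw [Fintype.sum_prod_type, Finset.sum_comm]
        refine Finset.sum_congr rfl fun c _ => Finset.sum_congr rfl fun a _ => ?_
        simp [modeProd, Matrix.mulVec, dotProduct, happ, hupd]
    _ ≤ ∑ c, ∑ a, (Z (e.symm (a, c)))^2 :=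
        Finset.sum_le_sum fun c _ => vec_proj_sq_le A hA _
    _ = ∑ idx, (Z idx)^2 := by
        rw [Finset.sum_comm, ← Equiv.sum_comp e.symm (fun idx => (Z idx)^2),
          Fintype.sum_prod_type]

lemma modeProd_sub {d : ℕ} {I : Fin d → ℕ} (X Y : Tensor d I) (n : Fin d)
    (M : Matrix (Fin (I n)) (Fin (I n)) ℝ) :
    modeProd (X - Y) n M = modeProd X n M - modeProd Y n M := by
  funext idx
  simp [modeProd, mul_sub, Finset.sum_sub_distrib]

lemma finRange_split (d : ℕ) (hd : 0 < d) :
    List.finRange d = (List.finRange d).dropLast ++ [⟨d - 1, Nat.sub_lt hd Nat.one_pos⟩] := by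
  have hne : List.finRange d ≠ [] := by
    apply List.ne_nil_of_length_pos; simpa using hd
  have hlast : (List.finRange d).getLast hne = ⟨d - 1, Nat.sub_lt hd Nat.one_pos⟩ := by
    rw [List.getLast_eq_getElem]
    apply Fin.ext
    simp [List.getElem_finRange]
  conv_lhs => rw [← List.dropLast_append_getLast hne]
  rw [hlast]

/-- for two `d`-mode tensors `X`, `X̂` and orthogonal projections
`P k = A k * (A k)ᵀ` along each mode,
`‖X − X̂ ×₁ P₁ ⋯ ×_d P_d‖ ≤ ‖X − X̂ ×_d P_d‖ + ‖X̂ − X̂ ×₁ P₁ ⋯ ×_{d−1} P_{d−1}‖`. -/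
theorem statement6 {d : ℕ} (hd : 0 < d) {I : Fin d → ℕ} (X Xhat : Tensor d I)
    (r : Fin d → ℕ) (A : ∀ k : Fin d, Matrix (Fin (I k)) (Fin (r k)) ℝ)
    (hA : ∀ k, (A k)ᵀ * A k = 1) :
    tnorm (X - multiProd Xhat (fun k => A k * (A k)ᵀ) (List.finRange d)) ≤
      tnorm (X - modeProd Xhat ⟨d - 1, Nat.sub_lt hd Nat.one_pos⟩
          (A ⟨d - 1, Nat.sub_lt hd Nat.one_pos⟩ * (A ⟨d - 1, Nat.sub_lt hd Nat.one_pos⟩)ᵀ)) +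
      tnorm (Xhat - multiProd Xhat (fun k => A k * (A k)ᵀ) ((List.finRange d).dropLast)) := by
  set m : Fin d := ⟨d - 1, Nat.sub_lt hd Nat.one_pos⟩ with hm
  set P : ∀ k : Fin d, Matrix (Fin (I k)) (Fin (I k)) ℝ := fun k => A k * (A k)ᵀ with hPdef
  set Y := multiProd Xhat P ((List.finRange d).dropLast) with hY
  have hsplit : multiProd Xhat P (List.finRange d) = modeProd Y m (P m) := by
    conv_lhs => rw [finRange_split d hd]
    rw [hY]
    simp [multiProd, List.foldl_append]
    rfl
  have hdecomp : X - modeProd Y m (P m)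
      = (X - modeProd Xhat m (P m)) + modeProd (Xhat - Y) m (P m) := by
    rw [modeProd_sub]; abel
  rw [hsplit, hdecomp]
  refine (tnorm_add_le _ _).trans ?_
  have hc : tnorm (modeProd (Xhat - Y) m (P m)) ≤ tnorm (Xhat - Y) :=
    modeProd_contract (Xhat - Y) m (A m) (hA m)
  exact add_le_add le_rfl hc

end
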